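/- arXiv:1806.01770 — 2 statements merged into one kernel-verified Lean document; each statement's English description precedes it below -/
import Mathlib

section
/- For nonnegative Radon measures μ₁, μ₂ on ℝ_+ with nonzero total masses M₁ = μ₁(ℝ_+), M₂ = μ₂(ℝ_+), define ρ(μ₁,μ₂) = min(M₁,M₂)·W₁(μ₁/M₁, μ₂/M₂) + |M₁ − M₂|, where W₁ is the 1-Wasserstein distance. If K is a bounded interval containing the supports of μ₁ and μ₂, then with C_K = (1/3)·min{1, 2/|K|} one has C_K ρ(μ₁,μ₂) ≤ d₁(μ₁,μ₂) ≤ ρ(μ₁,μ₂), where d₁ is the flat metric. -/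
open MeasureTheory

/-- The flat (bounded Lipschitz) metric on nonnegative measures. -/
noncomputable def flatDist {X : Type*} [MeasurableSpace X] [PseudoMetricSpace X]
    (μ ν : Measure X) : ℝ :=
  ⨆ φ : {f : X → ℝ // LipschitzWith 1 f ∧ ∀ x, |f x| ≤ 1},
    (∫ x, φ.1 x ∂μ - ∫ x, φ.1 x ∂ν)

/-- The 1-Wasserstein distance via Kantorovich–Rubinstein duality. -/
noncomputable def W1 {X : Type*} [MeasurableSpace X] [PseudoMetricSpace X]
    (μ ν : Measure X) : ℝ :=
  ⨆ φ : {f : X → ℝ // LipschitzWith 1 f},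
    (∫ x, φ.1 x ∂μ - ∫ x, φ.1 x ∂ν)

open Set

lemma lip_abs_sub {f : ℝ → ℝ} (hf : LipschitzWith 1 f) (x y : ℝ) :
    |f x - f y| ≤ |x - y| := by
  have := hf.dist_le_mul x y
  simpa [Real.dist_eq] using this

lemma lip_integrable {μ : Measure ℝ} [IsFiniteMeasure μ] {a b : ℝ}
    (hmem : ∀ᵐ x ∂μ, x ∈ Icc a b) {f : ℝ → ℝ} (hf : LipschitzWith 1 f) :
    Integrable f μ := by
  refine (integrable_const (|f a| + (b - a))).mono'
    hf.continuous.aestronglyMeasurable ?_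
  filter_upwards [hmem] with x hx
  have h1 : |f x - f a| ≤ |x - a| := lip_abs_sub hf x a
  have h2 : |x - a| ≤ b - a := by
    rw [abs_of_nonneg (by linarith [hx.1])]; linarith [hx.2]
  have h3 : |f x| - |f a| ≤ |f x - f a| := abs_sub_abs_le_abs_sub _ _
  have : ‖f x‖ = |f x| := rfl
  rw [this]; linarith

lemma integral_bound {μ : Measure ℝ} [IsFiniteMeasure μ] {a b : ℝ}
    (hmem : ∀ᵐ x ∂μ, x ∈ Icc a b) {f : ℝ → ℝ} {C : ℝ}
    (hC : ∀ x ∈ Icc a b, |f x| ≤ C) :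
    |∫ x, f x ∂μ| ≤ C * (μ Set.univ).toReal := by
  have h : ∀ᵐ x ∂μ, ‖f x‖ ≤ C := hmem.mono fun x hx => hC x hx
  simpa [Real.norm_eq_abs, measureReal_def] using norm_integral_le_of_norm_le_const h

lemma ae_mem_of_null_compl {μ : Measure ℝ} {a b : ℝ}
    (hs : ∀ s : Set ℝ, s ∩ Set.Icc a b = ∅ → μ s = 0) :
    ∀ᵐ x ∂μ, x ∈ Icc a b := by
  rw [ae_iff]
  have : {x | x ∉ Icc a b} = (Icc a b)ᶜ := rfl
  rw [this]
  exact hs _ (compl_inter_self _)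

lemma ae_mem_smul {μ : Measure ℝ} {c : ENNReal} {S : Set ℝ} (h : ∀ᵐ x ∂μ, x ∈ S) :
    ∀ᵐ x ∂(c • μ), x ∈ S := by
  rw [ae_iff] at h ⊢
  rw [Measure.smul_apply, h, smul_eq_mul, mul_zero]

lemma prob_of_inv_smul {μ : Measure ℝ} [IsFiniteMeasure μ] (h : μ Set.univ ≠ 0) :
    IsProbabilityMeasure ((μ Set.univ)⁻¹ • μ) :=
  ⟨by rw [Measure.smul_apply, smul_eq_mul, ENNReal.inv_mul_cancel h (measure_ne_top μ _)]⟩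

lemma integral_inv_smul (μ : Measure ℝ) (f : ℝ → ℝ) :
    ∫ x, f x ∂((μ Set.univ)⁻¹ • μ) = (μ Set.univ).toReal⁻¹ * ∫ x, f x ∂μ := by
  rw [integral_smul_measure, ENNReal.toReal_inv, smul_eq_mul]

/-- The flat-distance test family is bounded above. -/
lemma flat_bddAbove (μ₁ μ₂ : Measure ℝ) [IsFiniteMeasure μ₁] [IsFiniteMeasure μ₂] :
    BddAbove (Set.range fun φ : {f : ℝ → ℝ // LipschitzWith 1 f ∧ ∀ x, |f x| ≤ 1} =>
      (∫ x, φ.1 x ∂μ₁ - ∫ x, φ.1 x ∂μ₂)) := by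
  refine ⟨(μ₁ Set.univ).toReal + (μ₂ Set.univ).toReal, ?_⟩
  rintro _ ⟨φ, rfl⟩
  have b₁ : ‖∫ x, φ.1 x ∂μ₁‖ ≤ 1 * (μ₁ Set.univ).toReal :=
    norm_integral_le_of_norm_le_const (Filter.Eventually.of_forall fun x => by
      rw [Real.norm_eq_abs]; exact φ.2.2 x)
  have b₂ : ‖∫ x, φ.1 x ∂μ₂‖ ≤ 1 * (μ₂ Set.univ).toReal :=
    norm_integral_le_of_norm_le_const (Filter.Eventually.of_forall fun x => by
      rw [Real.norm_eq_abs]; exact φ.2.2 x)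
  rw [Real.norm_eq_abs] at b₁ b₂
  have hb₁ := abs_le.1 b₁
  have hb₂ := abs_le.1 b₂
  show ∫ x, φ.1 x ∂μ₁ - ∫ x, φ.1 x ∂μ₂ ≤ _
  linarith [hb₁.2, hb₂.1]

lemma flat_nonneg (μ₁ μ₂ : Measure ℝ) [IsFiniteMeasure μ₁] [IsFiniteMeasure μ₂] :
    0 ≤ flatDist μ₁ μ₂ := by
  have h := le_ciSup (flat_bddAbove μ₁ μ₂)
    (⟨fun _ => 0, (LipschitzWith.const 0).weaken zero_le_one, fun x => by norm_num⟩ :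
      {f : ℝ → ℝ // LipschitzWith 1 f ∧ ∀ x, |f x| ≤ 1})
  simpa [flatDist] using h

/-- The W1 test family is bounded above for measures supported in `Icc a b`. -/
lemma W1_bddAbove {ν₁ ν₂ : Measure ℝ} [IsProbabilityMeasure ν₁] [IsProbabilityMeasure ν₂]
    {a b : ℝ} (hm₁ : ∀ᵐ x ∂ν₁, x ∈ Icc a b) (hm₂ : ∀ᵐ x ∂ν₂, x ∈ Icc a b) :
    BddAbove (Set.range fun φ : {f : ℝ → ℝ // LipschitzWith 1 f} =>
      (∫ x, φ.1 x ∂ν₁ - ∫ x, φ.1 x ∂ν₂)) := by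
  refine ⟨2 * (b - a), ?_⟩
  rintro _ ⟨φ, rfl⟩
  have hint₁ : Integrable φ.1 ν₁ := lip_integrable hm₁ φ.2
  have hint₂ : Integrable φ.1 ν₂ := lip_integrable hm₂ φ.2
  have key : ∀ (ν : Measure ℝ) (_ : IsProbabilityMeasure ν) (_ : ∀ᵐ x ∂ν, x ∈ Icc a b)
      (_ : Integrable φ.1 ν), |∫ x, φ.1 x ∂ν - φ.1 a| ≤ b - a := by
    intro ν hp hm hint
    have : ∫ x, φ.1 x ∂ν - φ.1 a = ∫ x, (φ.1 x - φ.1 a) ∂ν := by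
      rw [integral_sub hint (integrable_const _), integral_const]
      simp
    rw [this]
    have := integral_bound hm (f := fun x => φ.1 x - φ.1 a) (C := b - a) ?_
    · simpa using this
    · intro x hx
      refine (lip_abs_sub φ.2 x a).trans ?_
      rw [abs_of_nonneg (by linarith [hx.1])]; linarith [hx.2]
  have k₁ := abs_le.1 (key ν₁ inferInstance hm₁ hint₁)
  have k₂ := abs_le.1 (key ν₂ inferInstance hm₂ hint₂)
  show ∫ x, φ.1 x ∂ν₁ - ∫ x, φ.1 x ∂ν₂ ≤ _
  linarith [k₁.2, k₂.1]

/-- Comparison between the flat metric and the auxiliary distance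
`ρ(μ₁,μ₂) = min(M₁,M₂) W₁(μ₁/M₁, μ₂/M₂) + |M₁ − M₂|` on a bounded interval `K = [a,b]`. -/
theorem flatDist_comparison_rho
    (μ₁ μ₂ : Measure ℝ) [IsFiniteMeasure μ₁] [IsFiniteMeasure μ₂]
    (h₁ : μ₁ Set.univ ≠ 0) (h₂ : μ₂ Set.univ ≠ 0)
    (a b : ℝ) (hab : a ≤ b) (ha : 0 ≤ a)
    (hs₁ : ∀ s : Set ℝ, s ∩ Set.Icc a b = ∅ → μ₁ s = 0)
    (hs₂ : ∀ s : Set ℝ, s ∩ Set.Icc a b = ∅ → μ₂ s = 0) :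
    (1 / 3) * min 1 (2 / (b - a)) *
        (min (μ₁ Set.univ).toReal (μ₂ Set.univ).toReal *
            W1 ((μ₁ Set.univ)⁻¹ • μ₁) ((μ₂ Set.univ)⁻¹ • μ₂) +
          |(μ₁ Set.univ).toReal - (μ₂ Set.univ).toReal|)
      ≤ flatDist μ₁ μ₂ ∧
    flatDist μ₁ μ₂
      ≤ min (μ₁ Set.univ).toReal (μ₂ Set.univ).toReal *
            W1 ((μ₁ Set.univ)⁻¹ • μ₁) ((μ₂ Set.univ)⁻¹ • μ₂) +
          |(μ₁ Set.univ).toReal - (μ₂ Set.univ).toReal| := by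
  have hm₁ : ∀ᵐ x ∂μ₁, x ∈ Icc a b := ae_mem_of_null_compl hs₁
  have hm₂ : ∀ᵐ x ∂μ₂, x ∈ Icc a b := ae_mem_of_null_compl hs₂
  set ν₁ := (μ₁ Set.univ)⁻¹ • μ₁ with hν₁
  set ν₂ := (μ₂ Set.univ)⁻¹ • μ₂ with hν₂
  haveI P₁ : IsProbabilityMeasure ν₁ := prob_of_inv_smul h₁
  haveI P₂ : IsProbabilityMeasure ν₂ := prob_of_inv_smul h₂
  have hmν₁ : ∀ᵐ x ∂ν₁, x ∈ Icc a b := ae_mem_smul hm₁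
  have hmν₂ : ∀ᵐ x ∂ν₂, x ∈ Icc a b := ae_mem_smul hm₂
  set M₁ := (μ₁ Set.univ).toReal with hM₁
  set M₂ := (μ₂ Set.univ).toReal with hM₂
  have hM₁pos : 0 < M₁ := ENNReal.toReal_pos h₁ (measure_ne_top _ _)
  have hM₂pos : 0 < M₂ := ENNReal.toReal_pos h₂ (measure_ne_top _ _)
  have hIμ₁ : ∀ f : ℝ → ℝ, ∫ x, f x ∂μ₁ = M₁ * ∫ x, f x ∂ν₁ := by
    intro f
    rw [hν₁, integral_inv_smul, ← hM₁, ← mul_assoc, mul_inv_cancel₀ hM₁pos.ne', one_mul]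
  have hIμ₂ : ∀ f : ℝ → ℝ, ∫ x, f x ∂μ₂ = M₂ * ∫ x, f x ∂ν₂ := by
    intro f
    rw [hν₂, integral_inv_smul, ← hM₂, ← mul_assoc, mul_inv_cancel₀ hM₂pos.ne', one_mul]
  have hflat_ge : ∀ φ : {f : ℝ → ℝ // LipschitzWith 1 f ∧ ∀ x, |f x| ≤ 1},
      ∫ x, φ.1 x ∂μ₁ - ∫ x, φ.1 x ∂μ₂ ≤ flatDist μ₁ μ₂ :=
    fun φ => le_ciSup (flat_bddAbove μ₁ μ₂) φ
  have hW1_ge : ∀ φ : {f : ℝ → ℝ // LipschitzWith 1 f},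
      ∫ x, φ.1 x ∂ν₁ - ∫ x, φ.1 x ∂ν₂ ≤ W1 ν₁ ν₂ :=
    fun φ => le_ciSup (W1_bddAbove hmν₁ hmν₂) φ
  -- |M₁ - M₂| ≤ flatDist
  haveI : Nonempty {f : ℝ → ℝ // LipschitzWith 1 f} :=
    ⟨⟨fun _ => 0, (LipschitzWith.const 0).weaken zero_le_one⟩⟩
  haveI : Nonempty {f : ℝ → ℝ // LipschitzWith 1 f ∧ ∀ x, |f x| ≤ 1} :=
    ⟨⟨fun _ => 0, (LipschitzWith.const 0).weaken zero_le_one, fun x => by norm_num⟩⟩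
  have habs : |M₁ - M₂| ≤ flatDist μ₁ μ₂ := by
    have c1 := hflat_ge ⟨fun _ => 1, (LipschitzWith.const 1).weaken zero_le_one,
      fun x => by norm_num⟩
    have c2 := hflat_ge ⟨fun _ => -1, (LipschitzWith.const (-1)).weaken zero_le_one,
      fun x => by norm_num⟩
    simp only [integral_const, smul_eq_mul, mul_one, mul_neg, measureReal_def, ← hM₁, ← hM₂] at c1 c2
    rw [abs_sub_le_iff]
    constructor <;> linarith
  constructor
  · -- lower bound
    rcases eq_or_lt_of_le hab with heq | hlt
    · have hc : min 1 (2 / (b - a)) = 0 := by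
        rw [heq, sub_self, div_zero]; exact min_eq_right zero_le_one
      rw [hc]
      simpa using flat_nonneg μ₁ μ₂
    · set c := min 1 (2 / (b - a)) with hc
      have hc0 : 0 < c := lt_min one_pos (div_pos two_pos (by linarith))
      have hc1 : c ≤ 1 := min_le_left _ _
      have hc2 : c * ((b - a) / 2) ≤ 1 := by
        have h2 : c ≤ 2 / (b - a) := min_le_right _ _
        have hba : (0:ℝ) < (b - a) / 2 := by linarith
        calc c * ((b - a) / 2) ≤ (2 / (b - a)) * ((b - a) / 2) :=
              mul_le_mul_of_nonneg_right h2 hba.le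
          _ = 1 := by
              rw [div_mul_div_comm, mul_comm (b - a) 2]
              exact div_self (ne_of_gt (by linarith : (0:ℝ) < 2 * (b - a)))
      -- key estimate
      have key : ∀ φ : {f : ℝ → ℝ // LipschitzWith 1 f},
          c * (min M₁ M₂ * (∫ x, φ.1 x ∂ν₁ - ∫ x, φ.1 x ∂ν₂))
            ≤ flatDist μ₁ μ₂ + |M₁ - M₂| := by
        intro φ
        set m : ℝ := (a + b) / 2 with hm
        set k : ℝ := φ.1 m with hk
        set g : ℝ → ℝ := fun x => c * (φ.1 x - k) with hg
        set ψ : ℝ → ℝ := fun x => max (-1) (min 1 (g x)) with hψ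
        have hφdist : ∀ x ∈ Icc a b, |φ.1 x - k| ≤ (b - a) / 2 := by
          intro x hx
          refine (lip_abs_sub φ.2 x m).trans ?_
          rw [abs_le]
          obtain ⟨hx1, hx2⟩ := hx
          constructor
          · simp only [hm]; linarith
          · simp only [hm]; linarith
        have hgbd : ∀ x ∈ Icc a b, |g x| ≤ 1 := by
          intro x hx
          have : |g x| = c * |φ.1 x - k| := by
            rw [hg, abs_mul, abs_of_nonneg hc0.le]
          rw [this]
          calc c * |φ.1 x - k| ≤ c * ((b - a) / 2) :=
                mul_le_mul_of_nonneg_left (hφdist x hx) hc0.le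
            _ ≤ 1 := hc2
        have hψg : ∀ x ∈ Icc a b, ψ x = g x := by
          intro x hx
          have hb1 := abs_le.1 (hgbd x hx)
          simp only [hψ]
          rw [min_eq_right hb1.2, max_eq_right hb1.1]
        have hψlip : LipschitzWith 1 ψ := by
          refine LipschitzWith.of_dist_le_mul fun x y => ?_
          rw [Real.dist_eq, Real.dist_eq]
          have e1 : |ψ x - ψ y| ≤ |min 1 (g x) - min 1 (g y)| := by
            simp only [hψ]
            rw [max_comm (-1) (min 1 (g x)), max_comm (-1) (min 1 (g y))]
            exact abs_max_sub_max_le_abs _ _ _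
          have e2 : |min 1 (g x) - min 1 (g y)| ≤ |g x - g y| := by
            have := abs_min_sub_min_le_max 1 (g x) 1 (g y)
            simpa using this
          have e3 : |g x - g y| ≤ |x - y| := by
            have : g x - g y = c * (φ.1 x - φ.1 y) := by rw [hg]; ring
            rw [this, abs_mul, abs_of_nonneg hc0.le]
            calc c * |φ.1 x - φ.1 y| ≤ 1 * |φ.1 x - φ.1 y| :=
                  mul_le_mul_of_nonneg_right hc1 (abs_nonneg _)
              _ = |φ.1 x - φ.1 y| := one_mul _
              _ ≤ |x - y| := lip_abs_sub φ.2 x y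
          push_cast
          linarith
        have hψbd : ∀ x, |ψ x| ≤ 1 := fun x =>
          abs_le.2 ⟨le_max_left _ _, max_le (by norm_num) (min_le_left _ _)⟩
        have hφint₁ : Integrable φ.1 μ₁ := lip_integrable hm₁ φ.2
        have hφint₂ : Integrable φ.1 μ₂ := lip_integrable hm₂ φ.2
        have hgi₁ : ∫ x, ψ x ∂μ₁ = c * (∫ x, φ.1 x ∂μ₁ - M₁ * k) := by
          rw [integral_congr_ae (hm₁.mono fun x hx => hψg x hx)]
          rw [hg]
          simp only []
          rw [integral_const_mul c, integral_sub hφint₁ (integrable_const k), integral_const]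
          rw [smul_eq_mul, measureReal_def, ← hM₁]
        have hgi₂ : ∫ x, ψ x ∂μ₂ = c * (∫ x, φ.1 x ∂μ₂ - M₂ * k) := by
          rw [integral_congr_ae (hm₂.mono fun x hx => hψg x hx)]
          rw [hg]
          simp only []
          rw [integral_const_mul c, integral_sub hφint₂ (integrable_const k), integral_const]
          rw [smul_eq_mul, measureReal_def, ← hM₂]
        have hF := hflat_ge ⟨ψ, hψlip, hψbd⟩
        simp only [] at hF
        rw [hgi₁, hgi₂, hIμ₁ φ.1, hIμ₂ φ.1] at hF
        set I₁ := ∫ x, φ.1 x ∂ν₁ with hI₁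
        set I₂ := ∫ x, φ.1 x ∂ν₂ with hI₂
        -- error bounds
        have hE : ∀ (ν : Measure ℝ) (_ : IsProbabilityMeasure ν) (_ : ∀ᵐ x ∂ν, x ∈ Icc a b)
            (_ : Integrable φ.1 ν), |∫ x, φ.1 x ∂ν - k| ≤ (b - a) / 2 := by
          intro ν hp hmem hint
          have : ∫ x, φ.1 x ∂ν - k = ∫ x, (φ.1 x - k) ∂ν := by
            rw [integral_sub hint (integrable_const _), integral_const]; simp
          rw [this]
          have := integral_bound hmem (f := fun x => φ.1 x - k) (C := (b - a) / 2)
            (fun x hx => hφdist x hx)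
          simpa using this
        have hE₁ := abs_le.1 (hE ν₁ P₁ hmν₁ (lip_integrable hmν₁ φ.2))
        have hE₂ := abs_le.1 (hE ν₂ P₂ hmν₂ (lip_integrable hmν₂ φ.2))
        rw [← hI₁] at hE₁
        rw [← hI₂] at hE₂
        rcases le_total M₁ M₂ with hM | hM
        · rw [min_eq_left hM, abs_of_nonpos (by linarith)]
          have t1 : c * (M₂ - M₁) * (I₂ - k) ≤ c * (M₂ - M₁) * ((b - a) / 2) :=
            mul_le_mul_of_nonneg_left hE₂.2
              (mul_nonneg hc0.le (by linarith))
          have t2 : c * (M₂ - M₁) * ((b - a) / 2) ≤ M₂ - M₁ := by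
            have h5 := mul_le_mul_of_nonneg_left hc2 (show (0:ℝ) ≤ M₂ - M₁ by linarith)
            linarith only [h5]
          linarith only [hF, t1, t2]
        · rw [min_eq_right hM, abs_of_nonneg (by linarith)]
          have t1 : c * (M₁ - M₂) * (k - I₁) ≤ c * (M₁ - M₂) * ((b - a) / 2) :=
            mul_le_mul_of_nonneg_left (by linarith only [hE₁.1])
              (mul_nonneg hc0.le (by linarith))
          have t2 : c * (M₁ - M₂) * ((b - a) / 2) ≤ M₁ - M₂ := by
            have h5 := mul_le_mul_of_nonneg_left hc2 (show (0:ℝ) ≤ M₁ - M₂ by linarith)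
            linarith only [h5]
          linarith only [hF, t1, t2]
      -- conclude
      have hminpos : 0 < min M₁ M₂ := lt_min hM₁pos hM₂pos
      have hmain : c * (min M₁ M₂ * W1 ν₁ ν₂) ≤ flatDist μ₁ μ₂ + |M₁ - M₂| := by
        have hW1le : W1 ν₁ ν₂ ≤ (flatDist μ₁ μ₂ + |M₁ - M₂|) / (c * min M₁ M₂) := by
          refine ciSup_le fun φ => ?_
          rw [le_div_iff₀ (mul_pos hc0 hminpos)]
          linarith only [key φ]
        rw [le_div_iff₀ (mul_pos hc0 hminpos)] at hW1le
        linarith only [hW1le]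
      have hcd : c * |M₁ - M₂| ≤ |M₁ - M₂| :=
        mul_le_of_le_one_left (abs_nonneg _) hc1
      linarith only [hmain, habs, hcd]
  · -- upper bound
    refine ciSup_le fun φ => ?_
    have hW := hW1_ge ⟨φ.1, φ.2.1⟩
    have hIb : ∀ (ν : Measure ℝ) (_ : IsProbabilityMeasure ν), |∫ x, φ.1 x ∂ν| ≤ 1 := by
      intro ν hp
      have h := norm_integral_le_of_norm_le_const (μ := ν) (f := φ.1) (C := 1)
        (Filter.Eventually.of_forall fun x => by rw [Real.norm_eq_abs]; exact φ.2.2 x)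
      rw [Real.norm_eq_abs] at h
      simpa using h
    have hI₁b := abs_le.1 (hIb ν₁ P₁)
    have hI₂b := abs_le.1 (hIb ν₂ P₂)
    show ∫ x, φ.1 x ∂μ₁ - ∫ x, φ.1 x ∂μ₂ ≤ _
    rw [hIμ₁ φ.1, hIμ₂ φ.1]
    set I₁ := ∫ x, φ.1 x ∂ν₁
    set I₂ := ∫ x, φ.1 x ∂ν₂
    rcases le_total M₁ M₂ with hM | hM
    · rw [min_eq_left hM, abs_of_nonpos (by linarith)]
      linarith only [mul_le_mul_of_nonneg_left hW hM₁pos.le,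
        mul_le_mul_of_nonneg_right hI₂b.1 (show (0:ℝ) ≤ M₂ - M₁ by linarith)]
    · rw [min_eq_right hM, abs_of_nonneg (by linarith)]
      linarith only [mul_le_mul_of_nonneg_left hW hM₂pos.le,
        mul_le_mul_of_nonneg_right hI₁b.2 (show (0:ℝ) ≤ M₁ - M₂ by linarith)]
end

section
/- Let (E,d) be a metric space and S : [0,T]×[0,T]×E → E a Lipschitz semiflow with constant L, i.e. S(0;τ) = Id, S(t+s;τ) = S(t;τ+s)∘S(s;τ), and d(S(t;τ)μ, S(s;τ)ν) ≤ L(d(μ,ν) + |t−s|). Then for every Lipschitz continuous curve t ↦ ν_t ∈ E on [0,T], the estimate d(ν_t, S(t;0)ν₀) ≤ L ∫₀ᵗ liminf_{h→0⁺} d(ν_{τ+h}, S(h;τ)ν_τ)/h dτ holds for all t ∈ [0,T]. -/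
open MeasureTheory Filter Set intervalIntegral

theorem aux_lip_deriv_bound {C : NNReal} {F : ℝ → ℝ} (hF : LipschitzWith C F) (x : ℝ) :
    |deriv F x| ≤ C := by
  by_cases hd : DifferentiableAt ℝ F x
  · have hs : Tendsto (slope F x) (nhdsWithin x {x}ᶜ) (nhds (deriv F x)) :=
      hasDerivAt_iff_tendsto_slope.1 hd.hasDerivAt
    have habs : Tendsto (fun y => |slope F x y|) (nhdsWithin x {x}ᶜ) (nhds |deriv F x|) :=
      hs.abs
    refine le_of_tendsto habs ?_
    filter_upwards [self_mem_nhdsWithin] with y hy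
    have hxy : y ≠ x := by simpa [Set.mem_compl_iff] using hy
    rw [slope_def_field, abs_div]
    rw [div_le_iff₀ (abs_pos.2 (sub_ne_zero.2 hxy))]
    have := hF.dist_le_mul y x
    simpa [Real.dist_eq] using this
  · simp [deriv_zero_of_not_differentiableAt hd]

theorem aux_lip_ftc {C : NNReal} {F : ℝ → ℝ} (hF : LipschitzWith C F) {a b : ℝ} (hab : a ≤ b) :
    F b - F a = ∫ x in Set.Icc a b, deriv F x := by
  have hcont : Continuous F := hF.continuous
  have hFi : ∀ c d : ℝ, IntervalIntegrable F volume c d := fun c d =>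
    hcont.intervalIntegrable c d
  set u : ℕ → ℝ := fun n => (n + 1 : ℝ)⁻¹ with hu
  have hupos : ∀ n, 0 < u n := fun n => by positivity
  have hu0 : Tendsto u atTop (nhds 0) := by
    simpa [hu, one_div] using tendsto_one_div_add_atTop_nhds_zero_nat (𝕜 := ℝ)
  set A : ℕ → ℝ := fun n => ∫ x in a..b, (F (x + u n) - F x) / u n with hA
  -- A n computed
  have hAeq : ∀ n, A n = ((∫ x in b..(b + u n), F x) - ∫ x in a..(a + u n), F x) / u n := by
    intro n
    have h1 : (∫ x in a..b, (F (x + u n) - F x) / u n)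
        = ((∫ x in a..b, F (x + u n)) - ∫ x in a..b, F x) / u n := by
      rw [intervalIntegral.integral_div, intervalIntegral.integral_sub]
      · exact (hcont.comp (continuous_id.add continuous_const)).intervalIntegrable a b
      · exact hFi a b
    have h2 : (∫ x in a..b, F (x + u n)) = ∫ x in (a + u n)..(b + u n), F x :=
      intervalIntegral.integral_comp_add_right F (u n)
    have h3 : (∫ x in a..(a + u n), F x) + (∫ x in (a + u n)..(b + u n), F x)
        = ∫ x in a..(b + u n), F x := integral_add_adjacent_intervals (hFi _ _) (hFi _ _)
    have h4 : (∫ x in a..b, F x) + (∫ x in b..(b + u n), F x) = ∫ x in a..(b + u n), F x :=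
      integral_add_adjacent_intervals (hFi _ _) (hFi _ _)
    rw [hA]
    simp only [h1, h2]
    have e1 : (∫ x in (a + u n)..(b + u n), F x) = (∫ x in a..(b + u n), F x) - ∫ x in a..(a + u n), F x := by linarith
    have e2 : (∫ x in a..(b + u n), F x) = (∫ x in a..b, F x) + ∫ x in b..(b + u n), F x := by linarith
    rw [e1, e2]; ring
  -- endpoint limits
  have hend : ∀ c : ℝ, Tendsto (fun n => (∫ x in c..(c + u n), F x) / u n) atTop (nhds (F c)) := by
    intro c
    have key : ∀ n, |(∫ x in c..(c + u n), F x) / u n - F c| ≤ C * u n := by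
      intro n
      have hc : (∫ x in c..(c + u n), (F x - F c)) = (∫ x in c..(c + u n), F x) - (c + u n - c) • F c := by
        rw [intervalIntegral.integral_sub (hFi _ _) (intervalIntegrable_const)]
        rw [intervalIntegral.integral_const]
      have hbd : ∀ x ∈ Set.uIoc c (c + u n), ‖F x - F c‖ ≤ C * u n := by
        intro x hx
        rw [Set.uIoc_of_le (by linarith [hupos n])] at hx
        have h1 := hF.dist_le_mul x c
        rw [Real.norm_eq_abs, ← Real.dist_eq]
        refine h1.trans ?_
        have : dist x c ≤ u n := by
          rw [Real.dist_eq, abs_of_pos (by linarith [hx.1])]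
          linarith [hx.2]
        exact mul_le_mul_of_nonneg_left this C.2
      have h2 := intervalIntegral.norm_integral_le_of_norm_le_const hbd
      rw [hc] at h2
      have h3 : |(∫ x in c..(c + u n), F x) - (u n) * F c| ≤ (C * u n) * u n := by
        have : |c + u n - c| = u n := by rw [show c + u n - c = u n by ring, abs_of_pos (hupos n)]
        simpa [Real.norm_eq_abs, this, smul_eq_mul, abs_of_pos (hupos n)] using h2
      rw [show (∫ x in c..(c + u n), F x) / u n - F c
          = ((∫ x in c..(c + u n), F x) - (u n) * F c) / u n by
        rw [sub_div, mul_div_cancel_left₀ _ (hupos n).ne']]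
      rw [abs_div, abs_of_pos (hupos n), div_le_iff₀ (hupos n)]
      exact h3
    have h0 : Tendsto (fun n => (C : ℝ) * u n) atTop (nhds 0) := by
      simpa using hu0.const_mul (C : ℝ)
    rw [← tendsto_sub_nhds_zero_iff]
    exact (tendsto_zero_iff_abs_tendsto_zero _).2 (squeeze_zero (fun n => abs_nonneg _) key h0)
  have hAlim1 : Tendsto A atTop (nhds (F b - F a)) := by
    have := ((hend b).sub (hend a))
    refine this.congr ?_
    intro n
    rw [hAeq n]; ring
  -- DCT
  have hmeas : ∀ n, AEStronglyMeasurable (fun x => (F (x + u n) - F x) / u n)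
      (volume.restrict (Set.Ioc a b)) :=
    fun n => (((hcont.comp (continuous_id.add continuous_const)).sub hcont).div_const _).aestronglyMeasurable.restrict
  have hbound : ∀ n, ∀ᵐ x ∂(volume.restrict (Set.Ioc a b)),
      ‖(F (x + u n) - F x) / u n‖ ≤ (C : ℝ) := by
    intro n
    refine Eventually.of_forall fun x => ?_
    rw [Real.norm_eq_abs, abs_div, abs_of_pos (hupos n), div_le_iff₀ (hupos n)]
    have := hF.dist_le_mul (x + u n) x
    rw [Real.dist_eq, Real.dist_eq] at this
    simpa [abs_of_pos (hupos n)] using this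
  have hae : ∀ᵐ x ∂(volume.restrict (Set.Ioc a b)),
      Tendsto (fun n => (F (x + u n) - F x) / u n) atTop (nhds (deriv F x)) := by
    refine ae_restrict_of_ae ?_
    filter_upwards [hF.ae_differentiableAt_of_real] with x hx
    have hs : Tendsto (slope F x) (nhdsWithin x {x}ᶜ) (nhds (deriv F x)) :=
      hasDerivAt_iff_tendsto_slope.1 hx.hasDerivAt
    have hseq : Tendsto (fun n => x + u n) atTop (nhdsWithin x {x}ᶜ) := by
      refine tendsto_nhdsWithin_of_tendsto_nhds_of_eventually_within _ ?_ ?_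
      · simpa using (tendsto_const_nhds.add hu0)
      · exact Eventually.of_forall fun n => by
          simp [Set.mem_compl_iff]; positivity
    have := hs.comp hseq
    refine this.congr fun n => ?_
    show slope F x (x + u n) = _
    rw [slope_def_field, add_sub_cancel_left]
  have hint : Integrable (fun _ : ℝ => (C : ℝ)) (volume.restrict (Set.Ioc a b)) := by
    exact integrable_const _
  have hAlim2 : Tendsto A atTop (nhds (∫ x in Set.Ioc a b, deriv F x)) := by
    have := tendsto_integral_of_dominated_convergence (μ := volume.restrict (Set.Ioc a b))
      (F := fun n x => (F (x + u n) - F x) / u n) (f := fun x => deriv F x)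
      (fun _ => (C : ℝ)) hmeas hint hbound hae
    refine this.congr fun n => ?_
    exact (intervalIntegral.integral_of_le hab).symm
  have := tendsto_nhds_unique hAlim1 hAlim2
  rw [this, integral_Icc_eq_integral_Ioc]

theorem aux_lip_ftc_le {C : NNReal} {F G : ℝ → ℝ} {a b : ℝ} (hab : a ≤ b)
    (hF : LipschitzWith C F) (hG : IntegrableOn G (Set.Icc a b))
    (hder : ∀ x ∈ Set.Ico a b, DifferentiableAt ℝ F x → deriv F x ≤ G x) :
    F b - F a ≤ ∫ x in Set.Icc a b, G x := by
  rw [aux_lip_ftc hF hab]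
  have hdint : IntegrableOn (deriv F) (Set.Icc a b) := by
    refine Integrable.mono' (integrable_const (C : ℝ)) ?_ ?_
    · exact (measurable_deriv F).aestronglyMeasurable.restrict
    · exact Eventually.of_forall fun x => by
        rw [Real.norm_eq_abs]; exact aux_lip_deriv_bound hF x
  refine setIntegral_mono_ae_restrict hdint hG ?_
  have h1 : ∀ᵐ x ∂(volume.restrict (Set.Icc a b)), x ∈ Set.Icc a b :=
    ae_restrict_mem measurableSet_Icc
  have h2 : ∀ᵐ x ∂(volume.restrict (Set.Icc a b)), DifferentiableAt ℝ F x :=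
    ae_restrict_of_ae hF.ae_differentiableAt_of_real
  have h3 : ∀ᵐ x ∂(volume.restrict (Set.Icc a b)), x ≠ b := by
    refine ae_restrict_of_ae ?_
    rw [ae_iff]
    have : {x : ℝ | ¬ x ≠ b} = {b} := by ext x; simp
    rw [this]; exact Real.volume_singleton
  filter_upwards [h1, h2, h3] with x hx hdx hxb
  exact hder x ⟨hx.1, lt_of_le_of_ne hx.2 hxb⟩ hdx


open MeasureTheory Filter

/-- Tangential (error) inequality for a Lipschitz semiflow `S(t;τ)` on a metric space:
for any Lipschitz curve `ν`,
`d(ν_t, S(t;0)ν₀) ≤ L ∫₀ᵗ liminf_{h→0⁺} d(ν_{τ+h}, S(h;τ)ν_τ)/h dτ`. -/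
theorem lipschitz_semiflow_tangential_inequality
    {E : Type*} [MetricSpace E] (T L : ℝ) (hT : 0 ≤ T) (hL : 0 ≤ L)
    (S : ℝ → ℝ → E → E)
    (hid : ∀ τ ∈ Set.Icc (0:ℝ) T, ∀ μ : E, S 0 τ μ = μ)
    (hsemi : ∀ s t τ : ℝ, 0 ≤ s → 0 ≤ t → τ ∈ Set.Icc (0:ℝ) T →
      τ + s ∈ Set.Icc (0:ℝ) T → τ + s + t ∈ Set.Icc (0:ℝ) T →
      ∀ μ : E, S (t + s) τ μ = S t (τ + s) (S s τ μ))
    (hlip : ∀ s t τ : ℝ, 0 ≤ s → 0 ≤ t → τ ∈ Set.Icc (0:ℝ) T →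
      τ + s ∈ Set.Icc (0:ℝ) T → τ + t ∈ Set.Icc (0:ℝ) T →
      ∀ μ ν : E, dist (S t τ μ) (S s τ ν) ≤ L * (dist μ ν + |t - s|))
    (ν : ℝ → E) (K : NNReal) (hν : LipschitzOnWith K ν (Set.Icc (0:ℝ) T)) :
    ∀ t ∈ Set.Icc (0:ℝ) T,
      dist (ν t) (S t 0 (ν 0))
        ≤ L * ∫ τ in Set.Icc (0:ℝ) t,
            liminf (fun h : ℝ => dist (ν (τ + h)) (S h τ (ν τ)) / h)
              (nhdsWithin 0 (Set.Ioi (0:ℝ))) := by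
  intro t ht
  obtain ⟨ht0, htT⟩ := ht
  have h0T : (0:ℝ) ∈ Set.Icc (0:ℝ) T := ⟨le_refl _, hT⟩
  -- the degenerate case L = 0
  by_cases hLz : L = 0
  · subst hLz
    have hall : dist (ν t) (S t 0 (ν 0)) = 0 := by
      have h2 := hlip 0 0 0 le_rfl le_rfl h0T (by simpa using h0T) (by simpa using h0T)
        (ν t) (S t 0 (ν 0))
      rw [hid 0 h0T (ν t), hid 0 h0T (S t 0 (ν 0))] at h2
      simp only [zero_mul] at h2
      exact le_antisymm h2 dist_nonneg
    rw [hall, zero_mul]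
  have hL' : 0 < L := lt_of_le_of_ne hL (Ne.symm hLz)
  set g : ℝ → ℝ := fun τ => liminf (fun h : ℝ => dist (ν (τ + h)) (S h τ (ν τ)) / h)
      (nhdsWithin 0 (Set.Ioi (0:ℝ))) with hgdef
  have hνd := lipschitzOnWith_iff_dist_le_mul.1 hν
  -- basic bound on the one-step error
  have hψb : ∀ τ h : ℝ, 0 ≤ τ → 0 ≤ h → τ + h ≤ T →
      dist (ν (τ + h)) (S h τ (ν τ)) ≤ (K + L) * h := by
    intro τ h h0 hh hT'
    have hτm : τ ∈ Set.Icc (0:ℝ) T := ⟨h0, by linarith⟩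
    have hτhm : τ + h ∈ Set.Icc (0:ℝ) T := ⟨by linarith, hT'⟩
    have l1 : dist (ν (τ + h)) (ν τ) ≤ K * h := by
      have := hνd (τ + h) hτhm τ hτm
      rw [Real.dist_eq] at this
      simpa [abs_of_nonneg hh] using this
    have l2 : dist (ν τ) (S h τ (ν τ)) ≤ L * h := by
      have h2 := hlip h 0 τ hh le_rfl hτm hτhm (by simpa using hτm) (ν τ) (ν τ)
      rw [hid τ hτm (ν τ)] at h2
      simpa [abs_of_nonneg hh, abs_sub_comm] using h2
    calc dist (ν (τ + h)) (S h τ (ν τ))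
        ≤ dist (ν (τ + h)) (ν τ) + dist (ν τ) (S h τ (ν τ)) := dist_triangle _ _ _
      _ ≤ K * h + L * h := add_le_add l1 l2
      _ = (K + L) * h := by ring
  -- Lipschitz continuity in h
  have hψh : ∀ τ h k : ℝ, 0 ≤ τ → 0 ≤ h → τ + h ≤ T → 0 ≤ k → τ + k ≤ T →
      |dist (ν (τ + h)) (S h τ (ν τ)) - dist (ν (τ + k)) (S k τ (ν τ))| ≤ (K + L) * |h - k| := by
    intro τ h k h0 hh hhT hk hkT
    have hτm : τ ∈ Set.Icc (0:ℝ) T := ⟨h0, by linarith⟩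
    have d1 : dist (ν (τ + h)) (ν (τ + k)) ≤ K * |h - k| := by
      have := hνd (τ + h) ⟨by linarith, hhT⟩ (τ + k) ⟨by linarith, hkT⟩
      rw [Real.dist_eq] at this
      simpa [add_sub_add_left_eq_sub] using this
    have d2 : dist (S h τ (ν τ)) (S k τ (ν τ)) ≤ L * |h - k| := by
      have := hlip k h τ hk hh hτm ⟨by linarith, hkT⟩ ⟨by linarith, hhT⟩ (ν τ) (ν τ)
      simpa using this
    have := dist_dist_dist_le (ν (τ + h)) (S h τ (ν τ)) (ν (τ + k)) (S k τ (ν τ))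
    rw [Real.dist_eq] at this
    refine this.trans ?_
    calc dist (ν (τ + h)) (ν (τ + k)) + dist (S h τ (ν τ)) (S k τ (ν τ))
        ≤ K * |h - k| + L * |h - k| := add_le_add d1 d2
      _ = (K + L) * |h - k| := by ring
  -- the key semigroup estimate for Φ
  have keyΦ : ∀ τ σ : ℝ, 0 ≤ τ → τ ≤ σ → σ ≤ t →
      |dist (S (t - σ) σ (ν σ)) (ν t) - dist (S (t - τ) τ (ν τ)) (ν t)|
        ≤ L * dist (ν σ) (S (σ - τ) τ (ν τ)) := by
    intro τ σ h0 hτσ hσt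
    have hτm : τ ∈ Set.Icc (0:ℝ) T := ⟨h0, by linarith⟩
    have hσm : τ + (σ - τ) ∈ Set.Icc (0:ℝ) T := ⟨by linarith, by linarith⟩
    have htm : τ + (σ - τ) + (t - σ) ∈ Set.Icc (0:ℝ) T := ⟨by linarith, by linarith⟩
    have hsg := hsemi (σ - τ) (t - σ) τ (by linarith) (by linarith) hτm hσm htm (ν τ)
    have e1 : (t - σ) + (σ - τ) = t - τ := by ring
    have e2 : τ + (σ - τ) = σ := by ring
    rw [e1, e2] at hsg
    rw [hsg]
    refine (abs_dist_sub_le (S (t - σ) σ (ν σ)) (S (t - σ) σ (S (σ - τ) τ (ν τ))) (ν t)).trans ?_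
    have := hlip (t - σ) (t - σ) σ (by linarith) (by linarith) ⟨by linarith, by linarith⟩
      ⟨by linarith, by linarith⟩ ⟨by linarith, by linarith⟩ (ν σ) (S (σ - τ) τ (ν τ))
    simpa using this
  -- bounds on g
  have hev_bounds : ∀ τ : ℝ, 0 ≤ τ → τ < T →
      ∀ᶠ h in nhdsWithin (0:ℝ) (Set.Ioi 0),
        0 ≤ dist (ν (τ + h)) (S h τ (ν τ)) / h ∧
          dist (ν (τ + h)) (S h τ (ν τ)) / h ≤ K + L := by
    intro τ h0 hτT
    filter_upwards [Ioo_mem_nhdsGT_of_mem (⟨le_rfl, sub_pos.2 hτT⟩ : (0:ℝ) ∈ Set.Ico 0 (T - τ))]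
      with h hh
    refine ⟨div_nonneg dist_nonneg hh.1.le, ?_⟩
    rw [div_le_iff₀ hh.1]
    exact hψb τ h h0 hh.1.le (by linarith [hh.2])
  have hcob : ∀ τ : ℝ, 0 ≤ τ → τ < T →
      IsCoboundedUnder (· ≥ ·) (nhdsWithin (0:ℝ) (Set.Ioi 0))
        (fun h => dist (ν (τ + h)) (S h τ (ν τ)) / h) := by
    intro τ h0 hτT
    refine Filter.IsBoundedUnder.isCoboundedUnder_ge ⟨(K : ℝ) + L, ?_⟩
    exact eventually_map.2 ((hev_bounds τ h0 hτT).mono fun h hh => hh.2)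
  have hbddge : ∀ τ : ℝ, 0 ≤ τ → τ < T →
      IsBoundedUnder (· ≥ ·) (nhdsWithin (0:ℝ) (Set.Ioi 0))
        (fun h => dist (ν (τ + h)) (S h τ (ν τ)) / h) := by
    intro τ h0 hτT
    exact ⟨0, eventually_map.2 ((hev_bounds τ h0 hτT).mono fun h hh => hh.1)⟩
  have hgbound : ∀ τ : ℝ, 0 ≤ τ → τ < T → 0 ≤ g τ ∧ g τ ≤ K + L := by
    intro τ h0 hτT
    constructor
    · exact le_liminf_of_le (hcob τ h0 hτT) ((hev_bounds τ h0 hτT).mono fun h hh => hh.1)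
    · exact liminf_le_of_frequently_le
        (((hev_bounds τ h0 hτT).mono fun h hh => hh.2).frequently) (hbddge τ h0 hτT)
  -- τ-continuity estimate at scale ≤ q
  have hψτ : ∀ q : ℝ, 0 < q → ∀ τ τ' : ℝ, 0 ≤ τ → τ ≤ τ' → τ' ≤ T - q → τ' - τ ≤ q →
      |dist (ν (τ' + q)) (S q τ' (ν τ')) - dist (ν (τ + q)) (S q τ (ν τ))|
        ≤ (K + L * (K + L + 1)) * (τ' - τ) := by
    intro q hq τ τ' h0 hττ' hτ'T hδq
    set δ : ℝ := τ' - τ with hδdef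
    have hδ0 : 0 ≤ δ := by linarith
    have hτm : τ ∈ Set.Icc (0:ℝ) T := ⟨h0, by linarith⟩
    have hτ'm : τ + δ ∈ Set.Icc (0:ℝ) T := ⟨by linarith, by linarith⟩
    have hτqm : τ + δ + (q - δ) ∈ Set.Icc (0:ℝ) T := ⟨by linarith, by linarith⟩
    have hsg := hsemi δ (q - δ) τ hδ0 (by linarith) hτm hτ'm hτqm (ν τ)
    have e1 : (q - δ) + δ = q := by ring
    have e2 : τ + δ = τ' := by rw [hδdef]; ring
    rw [e1, e2] at hsg
    -- hsg : S q τ (ν τ) = S (q - δ) τ' (S δ τ (ν τ))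
    have d1 : dist (ν (τ' + q)) (ν (τ + q)) ≤ K * δ := by
      have := hνd (τ' + q) ⟨by linarith, by linarith⟩ (τ + q) ⟨by linarith, by linarith⟩
      rw [Real.dist_eq] at this
      have e3 : |τ' + q - (τ + q)| = δ := by
        rw [show τ' + q - (τ + q) = δ by rw [hδdef]; ring, abs_of_nonneg hδ0]
      rw [e3] at this; exact this
    have d2 : dist (S q τ' (ν τ')) (S q τ (ν τ)) ≤ L * ((K + L) * δ + δ) := by
      rw [hsg]
      have hb := hlip (q - δ) q τ' (by linarith) (by linarith) ⟨by linarith, by linarith⟩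
        ⟨by linarith, by linarith⟩ ⟨by linarith, by linarith⟩ (ν τ') (S δ τ (ν τ))
      refine hb.trans ?_
      have hdistb : dist (ν τ') (S δ τ (ν τ)) ≤ (K + L) * δ := by
        have := hψb τ δ h0 hδ0 (by linarith)
        rw [e2] at this; exact this
      have e4 : |q - (q - δ)| = δ := by rw [show q - (q - δ) = δ by ring, abs_of_nonneg hδ0]
      rw [e4]
      exact mul_le_mul_of_nonneg_left (add_le_add hdistb le_rfl) hL
    have := dist_dist_dist_le (ν (τ' + q)) (S q τ' (ν τ')) (ν (τ + q)) (S q τ (ν τ))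
    rw [Real.dist_eq] at this
    refine this.trans ?_
    calc dist (ν (τ' + q)) (ν (τ + q)) + dist (S q τ' (ν τ')) (S q τ (ν τ))
        ≤ K * δ + L * ((K + L) * δ + δ) := add_le_add d1 d2
      _ = (K + L * (K + L + 1)) * δ := by ring
  -- continuity in τ on [0, T - q]
  have hcontq : ∀ q : ℝ, 0 < q →
      ContinuousOn (fun τ => dist (ν (τ + q)) (S q τ (ν τ))) (Set.Icc 0 (T - q)) := by
    intro q hq
    set C' : ℝ := K + L * (K + L + 1) with hC'def
    have hC0 : 0 ≤ C' := by positivity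
    intro x hx
    rw [Metric.continuousWithinAt_iff]
    intro ε hε
    refine ⟨min q (ε / (C' + 1)), lt_min hq (by positivity), ?_⟩
    intro y hy hyx
    have hkey : C' * (ε / (C' + 1)) < ε := by
      have h1 : (0:ℝ) < C' + 1 := by positivity
      calc C' * (ε / (C' + 1)) = ε * (C' / (C' + 1)) := by ring
        _ < ε * 1 := by
            refine mul_lt_mul_of_pos_left ?_ hε
            rw [div_lt_one h1]; linarith
        _ = ε := by ring
    rw [Real.dist_eq] at hyx ⊢
    rcases le_total x y with hxy | hxy
    · have h1 := hψτ q hq x y hx.1 hxy hy.2 (by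
        rw [abs_of_nonneg (by linarith)] at hyx
        linarith [min_le_left q (ε / (C' + 1)), hyx])
      refine lt_of_le_of_lt h1 ?_
      have h2 : y - x < min q (ε / (C' + 1)) := by
        rw [abs_of_nonneg (by linarith)] at hyx; exact hyx
      calc C' * (y - x) ≤ C' * (ε / (C' + 1)) := by
            refine mul_le_mul_of_nonneg_left ?_ hC0
            exact le_of_lt (lt_of_lt_of_le h2 (min_le_right _ _))
        _ < ε := hkey
    · have h1 := hψτ q hq y x hy.1 hxy hx.2 (by
        rw [abs_of_nonpos (by linarith), neg_sub] at hyx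
        linarith [min_le_left q (ε / (C' + 1)), hyx])
      rw [abs_sub_comm]
      refine lt_of_le_of_lt h1 ?_
      have h2 : x - y < min q (ε / (C' + 1)) := by
        rw [abs_of_nonpos (by linarith), neg_sub] at hyx; exact hyx
      calc C' * (x - y) ≤ C' * (ε / (C' + 1)) := by
            refine mul_le_mul_of_nonneg_left ?_ hC0
            exact le_of_lt (lt_of_lt_of_le h2 (min_le_right _ _))
        _ < ε := hkey
  -- the rational approximation scheme
  classical
  set Fq : ℚ → ℝ → ℝ := fun q τ =>
    if τ ∈ Set.Icc (0:ℝ) (T - q) then dist (ν (τ + q)) (S q τ (ν τ)) / q else (K + L) with hFqdef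
  have hFq_nonneg : ∀ (q : ℚ), 0 < (q:ℝ) → ∀ τ, 0 ≤ Fq q τ := by
    intro q hq τ
    rw [hFqdef]
    dsimp only
    split_ifs
    · exact div_nonneg dist_nonneg hq.le
    · positivity
  have hne : ∀ n : ℕ, Nonempty {q : ℚ // 0 < (q:ℝ) ∧ (q:ℝ) < 1 / (n + 1)} := by
    intro n
    obtain ⟨q, hq1, hq2⟩ := exists_rat_btwn (show (0:ℝ) < 1 / (n + 1) by positivity)
    exact ⟨⟨q, hq1, hq2⟩⟩
  set I : ℕ → ℝ → ℝ := fun n τ =>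
    ⨅ q : {q : ℚ // 0 < (q:ℝ) ∧ (q:ℝ) < 1 / (n + 1)}, Fq q τ with hIdef
  set G : ℝ → ℝ := fun τ => ⨆ n : ℕ, I n τ with hGdef
  have hbddBelow : ∀ (n : ℕ) (τ : ℝ),
      BddBelow (Set.range fun q : {q : ℚ // 0 < (q:ℝ) ∧ (q:ℝ) < 1 / (n + 1)} => Fq q τ) := by
    intro n τ
    refine ⟨0, ?_⟩
    rintro x ⟨q, rfl⟩
    exact hFq_nonneg q q.2.1 τ
  -- measurability of each Fq
  have hFq_meas : ∀ (q : ℚ), 0 < (q:ℝ) →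
      AEMeasurable (Fq q) (volume.restrict (Set.Icc (0:ℝ) t)) := by
    intro q hq
    set s : Set ℝ := Set.Icc (0:ℝ) (T - q) with hsdef
    have hs : MeasurableSet s := measurableSet_Icc
    have hsplit : Set.Icc (0:ℝ) t = (Set.Icc (0:ℝ) t ∩ s) ∪ (Set.Icc (0:ℝ) t \ s) :=
      (Set.inter_union_diff _ _).symm
    have hrestr : volume.restrict (Set.Icc (0:ℝ) t)
        = volume.restrict (Set.Icc (0:ℝ) t ∩ s) + volume.restrict (Set.Icc (0:ℝ) t \ s) := by
      rw [← Measure.restrict_union (Set.disjoint_sdiff_right.mono_left Set.inter_subset_right)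
        (measurableSet_Icc.diff hs), ← hsplit]
    rw [hrestr, aemeasurable_add_measure_iff]
    constructor
    · have hcont : ContinuousOn (fun τ => dist (ν (τ + q)) (S q τ (ν τ)) / q) s :=
        (hcontq q hq).div_const _
      have h1 : AEMeasurable (fun τ => dist (ν (τ + q)) (S q τ (ν τ)) / q)
          (volume.restrict (Set.Icc (0:ℝ) t ∩ s)) :=
        (hcont.aemeasurable hs).mono_measure
          (Measure.restrict_mono Set.inter_subset_right le_rfl)
      refine h1.congr ?_
      filter_upwards [ae_restrict_mem (measurableSet_Icc.inter hs)] with x hx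
      rw [hFqdef]
      dsimp only
      rw [if_pos hx.2]
    · refine (aemeasurable_const (b := (K:ℝ) + L)).congr ?_
      filter_upwards [ae_restrict_mem (measurableSet_Icc.diff hs)] with x hx
      rw [hFqdef]
      dsimp only
      rw [if_neg hx.2]
  have hI_meas : ∀ n, AEMeasurable (I n) (volume.restrict (Set.Icc (0:ℝ) t)) := by
    intro n
    haveI := hne n
    exact AEMeasurable.iInf fun q => hFq_meas q q.2.1
  have hG_meas : AEMeasurable G (volume.restrict (Set.Icc (0:ℝ) t)) :=
    AEMeasurable.iSup hI_meas
  have hgval : ∀ τ : ℝ, g τ = liminf (fun h : ℝ => dist (ν (τ + h)) (S h τ (ν τ)) / h)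
      (nhdsWithin 0 (Set.Ioi (0:ℝ))) := fun τ => rfl
  -- pointwise identification of G with g
  have hGg : ∀ τ : ℝ, 0 ≤ τ → τ < T → G τ = g τ := by
    intro τ h0 hτT
    have hTτ : 0 < T - τ := sub_pos.2 hτT
    have hIle : ∀ n : ℕ, I n τ ≤ K + L := by
      intro n
      obtain ⟨q, hq1, hq2⟩ :=
        exists_rat_btwn (show (0:ℝ) < min ((1:ℝ)/(n+1)) (T - τ) by positivity)
      have hq0 : 0 < (q:ℝ) := hq1
      have hqlt : (q:ℝ) < 1/(n+1) := hq2.trans_le (min_le_left _ _)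
      have hqT : (q:ℝ) < T - τ := hq2.trans_le (min_le_right _ _)
      refine (ciInf_le (hbddBelow n τ) ⟨q, hq0, hqlt⟩).trans ?_
      rw [hFqdef]; dsimp only
      split_ifs with hcase
      · rw [div_le_iff₀ hq0]
        exact hψb τ q h0 hq0.le (by linarith)
      · exact le_refl _
    have hImono : ∀ n m : ℕ, n ≤ m → I n τ ≤ I m τ := by
      intro n m hnm
      haveI := hne m
      refine le_ciInf fun q => ?_
      have hlt : (q.1:ℝ) < 1/(n+1) := by
        refine lt_of_lt_of_le q.2.2 ?_
        refine one_div_le_one_div_of_le (by positivity) ?_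
        push_cast
        exact_mod_cast Nat.add_le_add_right hnm 1
      exact ciInf_le (hbddBelow n τ) ⟨q.1, q.2.1, hlt⟩
    have hIle_g : ∀ n : ℕ, (1:ℝ)/(n+1) ≤ T - τ → I n τ ≤ g τ := by
      intro n hn
      rw [hgval]
      refine le_liminf_of_le (hcob τ h0 hτT) ?_
      filter_upwards [Ioo_mem_nhdsGT_of_mem (⟨le_rfl, show (0:ℝ) < (1:ℝ)/(n+1) by positivity⟩ :
        (0:ℝ) ∈ Set.Ico 0 ((1:ℝ)/(n+1)))] with h hh
      refine le_of_forall_pos_le_add fun ε hε => ?_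
      have hlipk : LipschitzOnWith ((K + L : ℝ)).toNNReal
          (fun k => dist (ν (τ + k)) (S k τ (ν τ))) (Set.Icc 0 (T - τ)) := by
        rw [lipschitzOnWith_iff_dist_le_mul]
        intro x hx y hy
        rw [Real.coe_toNNReal _ (by positivity), Real.dist_eq, Real.dist_eq]
        exact hψh τ x y h0 hx.1 (by linarith [hx.2]) hy.1 (by linarith [hy.2])
      have hmemh : h ∈ Set.Icc (0:ℝ) (T - τ) := ⟨hh.1.le, by linarith [hh.2]⟩
      have hc2 : ContinuousWithinAt (fun k => dist (ν (τ + k)) (S k τ (ν τ)) / k)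
          (Set.Icc 0 (T - τ)) h :=
        (hlipk.continuousOn h hmemh).div continuousWithinAt_id (ne_of_gt hh.1)
      have hc3 : ContinuousWithinAt (fun k => dist (ν (τ + k)) (S k τ (ν τ)) / k)
          (Set.Ioo 0 (1/(n+1))) h :=
        hc2.mono (fun k hk => ⟨hk.1.le, by linarith [hk.2, hn]⟩)
      rw [Metric.continuousWithinAt_iff] at hc3
      obtain ⟨δ, hδ0, hδ⟩ := hc3 ε hε
      obtain ⟨q, hq1, hq2⟩ := exists_rat_btwn (show max (h - δ) 0 < h from max_lt (by linarith) hh.1)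
      have hq0 : 0 < (q:ℝ) := lt_of_le_of_lt (le_max_right _ _) hq1
      have hqmem : (q:ℝ) ∈ Set.Ioo (0:ℝ) (1/(n+1)) := ⟨hq0, by linarith [hh.2]⟩
      have hqd : dist (q:ℝ) h < δ := by
        rw [Real.dist_eq, abs_of_nonpos (by linarith)]
        have h8 := lt_of_le_of_lt (le_max_left (h - δ) 0) hq1
        linarith
      have happrox := hδ hqmem hqd
      rw [Real.dist_eq] at happrox
      have hFqval : Fq q τ = dist (ν (τ + q)) (S q τ (ν τ)) / q := by
        rw [hFqdef]; dsimp only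
        split_ifs with hcase
        · rfl
        · exact absurd ⟨h0, by linarith [hqmem.2, hn]⟩ hcase
      have hstep : I n τ ≤ dist (ν (τ + q)) (S q τ (ν τ)) / q :=
        hFqval ▸ ciInf_le (hbddBelow n τ) ⟨q, hq0, hqmem.2⟩
      refine hstep.trans ?_
      have h7 := abs_sub_le_iff.1 happrox.le
      linarith [h7.1]
    have hbddAboveI : BddAbove (Set.range fun n : ℕ => I n τ) := by
      refine ⟨K + L, ?_⟩
      rintro x ⟨n, rfl⟩
      exact hIle n
    have hG_le : G τ ≤ g τ := by
      rw [hGdef]; dsimp only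
      refine ciSup_le fun n => ?_
      obtain ⟨m, hm⟩ := exists_nat_one_div_lt hTτ
      refine (hImono n (max n m) (le_max_left _ _)).trans (hIle_g (max n m) ?_)
      have h1 : (1:ℝ)/((max n m : ℕ)+1) ≤ 1/(m+1) := by
        refine one_div_le_one_div_of_le (by positivity) ?_
        push_cast
        exact_mod_cast Nat.add_le_add_right (le_max_right n m) 1
      linarith
    have hg_le : g τ ≤ G τ := by
      by_contra hcon
      push_neg at hcon
      obtain ⟨c, hc1, hc2⟩ := exists_between hcon
      rw [hgval] at hc2
      have hev := eventually_lt_of_lt_liminf hc2 (hbddge τ h0 hτT)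
      obtain ⟨u, hu0, huss⟩ := mem_nhdsGT_iff_exists_Ioc_subset.1 hev
      obtain ⟨n, hn⟩ := exists_nat_one_div_lt (show (0:ℝ) < min u (T - τ) from lt_min hu0 hTτ)
      have hcI : c ≤ I n τ := by
        haveI := hne n
        refine le_ciInf fun q => ?_
        have hq0 : 0 < (q.1:ℝ) := q.2.1
        have hqu : (q.1:ℝ) ≤ u := by
          have h5 := q.2.2
          have h6 := min_le_left u (T - τ)
          linarith
        have hqT : (q.1:ℝ) < T - τ := by
          have h5 := q.2.2
          have h6 := min_le_right u (T - τ)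
          linarith
        have h9 : c < dist (ν (τ + q.1)) (S q.1 τ (ν τ)) / q.1 := huss ⟨hq0, hqu⟩
        have hFqval : Fq q.1 τ = dist (ν (τ + q.1)) (S q.1 τ (ν τ)) / q.1 := by
          rw [hFqdef]; dsimp only
          split_ifs with hcase
          · rfl
          · exact absurd ⟨h0, by linarith⟩ hcase
        rw [hFqval]
        exact h9.le
      have h10 : c ≤ G τ := hcI.trans (le_ciSup hbddAboveI n)
      linarith
    exact le_antisymm hG_le hg_le
  -- a.e. identification and integrability of g on [0, t]
  have haeT : ∀ᵐ τ ∂(volume.restrict (Set.Icc (0:ℝ) t)), τ ≠ T := by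
    refine ae_restrict_of_ae ?_
    rw [ae_iff]
    have h5 : {τ : ℝ | ¬ τ ≠ T} = {T} := by ext x; simp
    rw [h5]
    exact Real.volume_singleton
  have hae_eq : g =ᵐ[volume.restrict (Set.Icc (0:ℝ) t)] G := by
    filter_upwards [ae_restrict_mem measurableSet_Icc, haeT] with τ hτ hτT
    exact (hGg τ hτ.1 (lt_of_le_of_ne (le_trans hτ.2 htT) hτT)).symm
  have hg_meas : AEMeasurable g (volume.restrict (Set.Icc (0:ℝ) t)) :=
    hG_meas.congr hae_eq.symm
  have hg_int : IntegrableOn g (Set.Icc (0:ℝ) t) := by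
    refine Integrable.mono' (integrable_const ((K:ℝ) + L)) hg_meas.aestronglyMeasurable ?_
    filter_upwards [ae_restrict_mem measurableSet_Icc, haeT] with τ hτ hτT
    have hb := hgbound τ hτ.1 (lt_of_le_of_ne (le_trans hτ.2 htT) hτT)
    rw [Real.norm_eq_abs, abs_le]
    exact ⟨by linarith [hb.1], hb.2⟩
  -- the comparison function Φ and its Lipschitz extension
  set Φ : ℝ → ℝ := fun τ => dist (S (t - τ) τ (ν τ)) (ν t) with hΦdef
  have hΦval : ∀ τ, Φ τ = dist (S (t - τ) τ (ν τ)) (ν t) := fun τ => rfl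
  have hΦlip : LipschitzOnWith (L * ((K : ℝ) + L)).toNNReal Φ (Set.Icc (0:ℝ) t) := by
    rw [lipschitzOnWith_iff_dist_le_mul]
    intro x hx y hy
    rw [Real.coe_toNNReal _ (by positivity), Real.dist_eq, Real.dist_eq, hΦval, hΦval]
    rcases le_total y x with hxy | hxy
    · have h2 : dist (ν x) (S (x - y) y (ν y)) ≤ ((K:ℝ) + L) * (x - y) := by
        have h3 := hψb y (x - y) hy.1 (by linarith) (by linarith [hx.2, htT])
        rw [show y + (x - y) = x by ring] at h3
        exact h3
      calc |dist (S (t - x) x (ν x)) (ν t) - dist (S (t - y) y (ν y)) (ν t)|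
          ≤ L * dist (ν x) (S (x - y) y (ν y)) := keyΦ y x hy.1 hxy hx.2
        _ ≤ L * (((K:ℝ) + L) * (x - y)) := mul_le_mul_of_nonneg_left h2 hL
        _ = L * ((K:ℝ) + L) * |x - y| := by rw [abs_of_nonneg (by linarith)]; ring
    · have h2 : dist (ν y) (S (y - x) x (ν x)) ≤ ((K:ℝ) + L) * (y - x) := by
        have h3 := hψb x (y - x) hx.1 (by linarith) (by linarith [hy.2, htT])
        rw [show x + (y - x) = y by ring] at h3
        exact h3
      rw [abs_sub_comm]
      calc |dist (S (t - y) y (ν y)) (ν t) - dist (S (t - x) x (ν x)) (ν t)|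
          ≤ L * dist (ν y) (S (y - x) x (ν x)) := keyΦ x y hx.1 hxy hy.2
        _ ≤ L * (((K:ℝ) + L) * (y - x)) := mul_le_mul_of_nonneg_left h2 hL
        _ = L * ((K:ℝ) + L) * |x - y| := by rw [abs_sub_comm, abs_of_nonneg (by linarith)]; ring
  obtain ⟨Φe, hΦe_lip, hΦe_eq⟩ := hΦlip.extend_real
  set F : ℝ → ℝ := fun x => -Φe x with hFdef
  have hFlip : LipschitzWith (L * ((K:ℝ) + L)).toNNReal F := by
    rw [lipschitzWith_iff_dist_le_mul]
    intro x y
    rw [hFdef]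
    dsimp only
    rw [dist_neg_neg]
    exact lipschitzWith_iff_dist_le_mul.1 hΦe_lip x y
  -- derivative bound
  have hder : ∀ x ∈ Set.Ico (0:ℝ) t, DifferentiableAt ℝ F x → deriv F x ≤ L * g x := by
    intro x hx hdF
    have hxt : 0 < t - x := sub_pos.2 hx.2
    have hx0 : 0 ≤ x := hx.1
    have hxT : x < T := lt_of_lt_of_le hx.2 htT
    have hmap : Tendsto (fun h : ℝ => x + h) (nhdsWithin 0 (Set.Ioi 0))
        (nhdsWithin x {x}ᶜ) := by
      refine tendsto_nhdsWithin_of_tendsto_nhds_of_eventually_within _ ?_ ?_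
      · have h4 : Tendsto (fun h : ℝ => x + h) (nhds 0) (nhds x) := by
          simpa using (continuous_add_left x).tendsto (0:ℝ)
        exact h4.mono_left nhdsWithin_le_nhds
      · filter_upwards [self_mem_nhdsWithin] with h hh
        simp only [Set.mem_compl_iff, Set.mem_singleton_iff]
        have hh' : (0:ℝ) < h := hh
        intro hco
        have : h = 0 := by linarith
        exact absurd this hh'.ne'
    have hslope : Tendsto (fun h : ℝ => slope F x (x + h)) (nhdsWithin 0 (Set.Ioi 0))
        (nhds (deriv F x)) :=
      (hasDerivAt_iff_tendsto_slope.1 hdF.hasDerivAt).comp hmap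
    have hliminf_eq : deriv F x
        = liminf (fun h : ℝ => slope F x (x + h)) (nhdsWithin 0 (Set.Ioi 0)) :=
      (hslope.liminf_eq).symm
    have hev2 : ∀ᶠ h in nhdsWithin (0:ℝ) (Set.Ioi 0),
        slope F x (x + h) ≤ L * (dist (ν (x + h)) (S h x (ν x)) / h) := by
      filter_upwards [Ioo_mem_nhdsGT_of_mem (⟨le_rfl, hxt⟩ : (0:ℝ) ∈ Set.Ico 0 (t - x))]
        with h hh
      have hmem1 : x ∈ Set.Icc (0:ℝ) t := ⟨hx0, hx.2.le⟩
      have hmem2 : x + h ∈ Set.Icc (0:ℝ) t := ⟨by linarith [hh.1], by linarith [hh.2]⟩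
      have hFx : F x = -Φ x := by rw [hFdef]; dsimp only; rw [← hΦe_eq hmem1]
      have hFxh : F (x + h) = -Φ (x + h) := by rw [hFdef]; dsimp only; rw [← hΦe_eq hmem2]
      rw [slope_def_field, hFx, hFxh, add_sub_cancel_left]
      have hkey := keyΦ x (x + h) hx0 (by linarith [hh.1]) (by linarith [hh.2])
      rw [show x + h - x = h by ring] at hkey
      have h6 : Φ x - Φ (x + h) ≤ L * dist (ν (x + h)) (S h x (ν x)) := by
        calc Φ x - Φ (x + h)
            = -(dist (S (t - (x + h)) (x + h) (ν (x + h))) (ν t)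
                - dist (S (t - x) x (ν x)) (ν t)) := by rw [hΦval, hΦval]; ring
          _ ≤ |dist (S (t - (x + h)) (x + h) (ν (x + h))) (ν t)
                - dist (S (t - x) x (ν x)) (ν t)| := neg_le_abs _
          _ ≤ L * dist (ν (x + h)) (S h x (ν x)) := hkey
      have h7 : (-Φ (x + h) - -Φ x) / h = (Φ x - Φ (x + h)) / h := by ring
      rw [h7, ← mul_div_assoc]
      exact (div_le_div_iff_of_pos_right hh.1).2 h6
    rw [hliminf_eq]
    have hbd1 : IsBoundedUnder (· ≥ ·) (nhdsWithin (0:ℝ) (Set.Ioi 0))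
        (fun h => slope F x (x + h)) := hslope.isBoundedUnder_ge
    have hcob2 : IsCoboundedUnder (· ≥ ·) (nhdsWithin (0:ℝ) (Set.Ioi 0))
        (fun h => L * (dist (ν (x + h)) (S h x (ν x)) / h)) := by
      refine Filter.IsBoundedUnder.isCoboundedUnder_ge ⟨L * ((K:ℝ) + L), ?_⟩
      refine eventually_map.2 ?_
      filter_upwards [hev_bounds x hx0 hxT] with h hh
      exact mul_le_mul_of_nonneg_left hh.2 hL
    refine (liminf_le_liminf hev2 hbd1 hcob2).trans ?_
    refine le_of_forall_pos_le_add fun ε hε => ?_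
    have hfreq : ∃ᶠ h in nhdsWithin (0:ℝ) (Set.Ioi 0),
        dist (ν (x + h)) (S h x (ν x)) / h < g x + ε / L := by
      refine frequently_lt_of_liminf_lt (hcob x hx0 hxT) ?_
      rw [← hgval x]
      exact lt_add_of_pos_right _ (div_pos hε hL')
    have hfreq2 : ∃ᶠ h in nhdsWithin (0:ℝ) (Set.Ioi 0),
        L * (dist (ν (x + h)) (S h x (ν x)) / h) ≤ L * g x + ε := by
      refine hfreq.mono fun h hh => ?_
      have h8 := mul_le_mul_of_nonneg_left hh.le hL
      rw [mul_add, mul_div_cancel₀ _ hL'.ne'] at h8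
      exact h8
    have hbd3 : IsBoundedUnder (· ≥ ·) (nhdsWithin (0:ℝ) (Set.Ioi 0))
        (fun h => L * (dist (ν (x + h)) (S h x (ν x)) / h)) := by
      refine ⟨0, eventually_map.2 ?_⟩
      filter_upwards [hev_bounds x hx0 hxT] with h hh
      exact mul_nonneg hL hh.1
    exact liminf_le_of_frequently_le hfreq2 hbd3
  -- final assembly
  have hgint2 : IntegrableOn (fun τ => L * g τ) (Set.Icc (0:ℝ) t) := hg_int.const_mul L
  have hmain := aux_lip_ftc_le ht0 hFlip hgint2 hder
  have hF0 : F 0 = -Φ 0 := by rw [hFdef]; dsimp only; rw [← hΦe_eq (Set.left_mem_Icc.2 ht0)]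
  have hFt : F t = -Φ t := by rw [hFdef]; dsimp only; rw [← hΦe_eq (Set.right_mem_Icc.2 ht0)]
  have hΦt : Φ t = 0 := by
    rw [hΦval, sub_self, hid t ⟨ht0, htT⟩]
    exact dist_self _
  have hΦ0 : Φ 0 = dist (ν t) (S t 0 (ν 0)) := by
    rw [hΦval, sub_zero, dist_comm]
  rw [hFt, hF0, hΦt, hΦ0] at hmain
  have hintmul : ∫ τ in Set.Icc (0:ℝ) t, L * g τ = L * ∫ τ in Set.Icc (0:ℝ) t, g τ :=
    integral_const_mul L g
  rw [hintmul] at hmain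
  linarith [hmain]
end
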